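/- Fix an anchor supply y_a > 0, static parameters θ̄ ∈ [0,1) (with θ := 1 − θ̄), ᾱ > 0, x̄_U ∈ [0,∞], and a redemption level x ∈ [0, y_a). Suppose b_a and b_a′ satisfy θ̄·y_a < b_a < b_a′ < y_a and that the resulting reserve ratios satisfy 1 > r(x; b_a) > θ̄ and 1 > r(x; b_a′) > θ̄, where for each anchor reserve value the dynamic parameters α, x_U, x_L are chosen by the selection rule. Then b(x; b_a) < b(x; b_a′); i.e., the reserve value at redemption level x is strictly increasing in the anchor reserve value at all non-trivial points. -/

import Mathlib

/- P-AMM redemption curve with the selection rule for dynamic parameters.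
   Static parameters: `θbar` (target reserve ratio floor), `αbar` (lower bound
   on the decay slope), `xbarU : EReal` (upper bound on `x_U`, possibly `∞`). -/

noncomputable section

namespace PAMM

/-- The unconstrained minimal slope `α̂`. -/
def alphaHat (θbar ba ya : ℝ) : ℝ :=
  if (1 + θbar) / 2 ≤ ba / ya then 2 * (1 - ba / ya) / ya
  else (1 - θbar) ^ 2 / (2 * (ba - θbar * ya))

/-- The selected slope `α := max(ᾱ, α̂)`. -/
def alphaSel (θbar αbar ba ya : ℝ) : ℝ := max αbar (alphaHat θbar ba ya)

/-- The unconstrained maximal upper cutoff `x̂_U` for slope `α`. -/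
def xUHat (θbar α ba ya : ℝ) : ℝ :=
  if α * (ya - ba) ≤ (1 - θbar) ^ 2 / 2 then ya - Real.sqrt (2 * (ya - ba) / α)
  else ya - (ya - ba) / (1 - θbar) - (1 - θbar) / (2 * α)

/-- The selected upper cutoff `x_U := min(x̄_U, x̂_U)` (where `x̄_U ∈ [0,∞]`). -/
def xUSel (θbar αbar : ℝ) (xbarU : EReal) (ba ya : ℝ) : ℝ :=
  (min xbarU ((xUHat θbar (alphaSel θbar αbar ba ya) ba ya : ℝ) : EReal)).toReal

/-- The lower cutoff `x_L`. -/
def xLSel (θbar αbar : ℝ) (xbarU : EReal) (ba ya : ℝ) : ℝ :=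
  ya - Real.sqrt ((ya - xUSel θbar αbar xbarU ba ya) ^ 2
    - 2 * (ya - ba) / alphaSel θbar αbar ba ya)

/-- The three-piece marginal redemption price curve. -/
def priceCurve (α xU xL x : ℝ) : ℝ :=
  if x ≤ xU then 1 else if x ≤ xL then 1 - α * (x - xU) else 1 - α * (xL - xU)

/-- The reserve value `b(x; b_a, y_a) = b_a − ∫₀ˣ p(t; b_a, y_a) dt` where the dynamic
    parameters are chosen by the selection rule for the anchor point `(b_a, y_a)`. -/
def reserveB (θbar αbar : ℝ) (xbarU : EReal) (ba ya x : ℝ) : ℝ :=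
  ba - ∫ t in (0:ℝ)..x,
    priceCurve (alphaSel θbar αbar ba ya) (xUSel θbar αbar xbarU ba ya)
      (xLSel θbar αbar xbarU ba ya) t

/-! ### Basic facts about the selection rule -/

section Params
variable {θbar αbar a ba ba' ya : ℝ}

lemma ratio_cond (hya : 0 < ya) :
    ((1 + θbar) / 2 ≤ ba / ya) ↔ ((1 + θbar) * ya ≤ 2 * ba) := by
  rw [div_le_div_iff₀ (by norm_num) hya]
  constructor <;> intro h <;> nlinarith

lemma branch1_eq (hya : 0 < ya) (b : ℝ) : 2 * (1 - b/ya)/ya = 2*(ya - b)/ya^2 := by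
  rw [div_eq_div_iff (by positivity) (by positivity)]
  field_simp

lemma alphaHat_pos (hθ1 : θbar < 1) (hya : 0 < ya) (hba0 : θbar * ya < ba)
    (hbaya : ba < ya) : 0 < alphaHat θbar ba ya := by
  have hth : 0 < 1 - θbar := by linarith
  unfold alphaHat
  split_ifs with h
  · rw [branch1_eq hya]
    have : 0 < ya - ba := by linarith
    positivity
  · have h1 : 0 < ba - θbar * ya := by linarith
    positivity

lemma alphaHat_anti (hθ1 : θbar < 1) (hya : 0 < ya) (hba0 : θbar * ya < ba)
    (hbaya : ba < ya) (hbb : ba ≤ ba') (hba'ya : ba' < ya) :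
    alphaHat θbar ba' ya ≤ alphaHat θbar ba ya := by
  unfold alphaHat
  simp only [ratio_cond hya, branch1_eq hya]
  have hd : 0 < ba - θbar * ya := by linarith
  have hd' : 0 < ba' - θbar * ya := by linarith
  split_ifs with h h' h'
  · rw [div_le_div_iff₀ (by positivity) (by positivity)]; nlinarith
  · rw [div_le_div_iff₀ (by positivity) (by positivity)]; nlinarith
  · exact absurd (le_trans h' (by linarith)) h
  · rw [div_le_div_iff₀ (by positivity) (by positivity)]
    nlinarith [sq_nonneg (1 - θbar)]

lemma alphaHat_ge1 (hθ1 : θbar < 1) (hya : 0 < ya) (hba0 : θbar * ya < ba)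
    (hbaya : ba < ya) : 2 * (ya - ba) / ya ^ 2 ≤ alphaHat θbar ba ya := by
  unfold alphaHat
  simp only [ratio_cond hya, branch1_eq hya]
  have hd : 0 < ba - θbar * ya := by linarith
  split_ifs with h
  · exact le_rfl
  · rw [div_le_div_iff₀ (by positivity) (by positivity)]
    nlinarith [sq_nonneg ((1-θbar)*ya - 2*(ya - ba))]

lemma xUHat_nonneg (hθ1 : θbar < 1) (hya : 0 < ya) (hba0 : θbar * ya < ba)
    (hbaya : ba < ya) (ha0 : 0 < a) (hahat : alphaHat θbar ba ya ≤ a) :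
    0 ≤ xUHat θbar a ba ya := by
  have hth : 0 < 1 - θbar := by linarith
  have hΔ : 0 < ya - ba := by linarith
  have hd : 0 < ba - θbar * ya := by linarith
  unfold xUHat
  split_ifs with h
  · have h1 : 2 * (ya - ba) / a ≤ ya ^ 2 := by
      rw [div_le_iff₀ ha0]
      have := le_trans (alphaHat_ge1 hθ1 hya hba0 hbaya) hahat
      rw [div_le_iff₀ (by positivity)] at this
      nlinarith
    have := Real.sqrt_le_sqrt h1
    rw [Real.sqrt_sq hya.le] at this
    linarith
  · push_neg at h
    have key : (1 - θbar)^2 ≤ 2 * a * (ba - θbar * ya) := by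
      rcases le_or_gt (2*(ya - ba)) ((1 - θbar)*ya) with hc | hc
      · nlinarith
      · have hnc : ¬ ((1 + θbar) / 2 ≤ ba / ya) := by
          rw [ratio_cond hya]; intro hh; nlinarith
        have := hahat
        unfold alphaHat at this
        rw [if_neg hnc] at this
        rw [div_le_iff₀ (by positivity)] at this
        nlinarith
    have h2 : (1 - θbar)/(2*a) ≤ (ba - θbar*ya)/(1-θbar) := by
      rw [div_le_div_iff₀ (by positivity) hth]
      nlinarith
    have h3 : (ya - ba)/(1-θbar) + (ba - θbar*ya)/(1-θbar) = ya := by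
      field_simp; ring
    linarith

lemma xUHat_lt_ya (hθ1 : θbar < 1) (hya : 0 < ya)
    (hbaya : ba < ya) (ha0 : 0 < a) : xUHat θbar a ba ya < ya := by
  have hth : 0 < 1 - θbar := by linarith
  have hΔ : 0 < ya - ba := by linarith
  unfold xUHat
  split_ifs with h
  · have : 0 < Real.sqrt (2 * (ya - ba) / a) := Real.sqrt_pos.2 (by positivity)
    linarith
  · have h1 : 0 < (ya - ba)/(1-θbar) := by positivity
    have h2 : 0 < (1-θbar)/(2*a) := by positivity
    linarith

lemma sq_xUHat (hθ1 : θbar < 1) (hya : 0 < ya)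
    (hbaya : ba < ya) (ha0 : 0 < a) :
    2 * (ya - ba) / a ≤ (ya - xUHat θbar a ba ya) ^ 2 := by
  have hth : 0 < 1 - θbar := by linarith
  have hΔ : 0 < ya - ba := by linarith
  unfold xUHat
  split_ifs with h
  · have e : ya - (ya - Real.sqrt (2 * (ya - ba) / a)) = Real.sqrt (2 * (ya - ba) / a) := by ring
    rw [e, Real.sq_sqrt (by positivity)]
  · have e : ya - (ya - (ya - ba) / (1 - θbar) - (1 - θbar) / (2 * a))
        = (ya - ba)/(1-θbar) + (1-θbar)/(2*a) := by ring
    rw [e]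
    have hpq : ((ya-ba)/(1-θbar)) * ((1-θbar)/(2*a)) = (ya-ba)/(2*a) := by
      field_simp
    have h4 : 2*(ya-ba)/a = 4*((ya-ba)/(2*a)) := by ring
    nlinarith [sq_nonneg ((ya-ba)/(1-θbar) - (1-θbar)/(2*a))]

/-- `ya - x̂U` in branch form. -/
lemma ya_sub_xUHat (hθ1 : θbar < 1) :
    ya - xUHat θbar a ba ya =
      if a * (ya - ba) ≤ (1 - θbar)^2/2 then Real.sqrt (2*(ya - ba)/a)
      else (ya - ba)/(1-θbar) + (1-θbar)/(2*a) := by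
  unfold xUHat
  split_ifs with h <;> ring

/-- When the hat slope binds, the hat cutoff is `0`. -/
lemma xUHat_hat_eq_zero (hθ1 : θbar < 1) (hya : 0 < ya) (hba0 : θbar * ya < ba)
    (hbaya : ba < ya) : xUHat θbar (alphaHat θbar ba ya) ba ya = 0 := by
  have hth : 0 < 1 - θbar := by linarith
  have hΔ : 0 < ya - ba := by linarith
  have hd : 0 < ba - θbar * ya := by linarith
  unfold alphaHat xUHat
  simp only [ratio_cond hya, branch1_eq hya]
  by_cases hC : (1 + θbar) * ya ≤ 2 * ba
  · rw [if_pos hC]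
    have hΔθ : 2 * (ya - ba) ≤ (1 - θbar) * ya := by nlinarith
    rw [if_pos (by rw [div_mul_eq_mul_div, div_le_div_iff₀ (by positivity) (by norm_num)]; nlinarith)]
    rw [show 2*(ya-ba)/(2*(ya-ba)/ya^2) = ya^2 by field_simp]
    rw [Real.sqrt_sq hya.le]; ring
  · rw [if_neg hC]
    push_neg at hC
    have hcond : ¬ ((1-θbar)^2/(2*(ba - θbar*ya)) * (ya - ba) ≤ (1-θbar)^2/2) := by
      rw [div_mul_eq_mul_div, div_le_div_iff₀ (by positivity) (by norm_num), not_le]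
      nlinarith [mul_pos (mul_pos hth hth) (show (0:ℝ) < (ya-ba) - (ba - θbar*ya) by linarith)]
    rw [if_neg hcond]
    rw [show (1-θbar)/(2*((1-θbar)^2/(2*(ba - θbar*ya)))) = (ba - θbar*ya)/(1-θbar) by
      field_simp]
    rw [show ya - (ya-ba)/(1-θbar) - (ba - θbar*ya)/(1-θbar)
        = ya - ((ya-ba) + (ba - θbar*ya))/(1-θbar) by ring]
    rw [show (ya-ba) + (ba - θbar*ya) = (1-θbar)*ya by ring]
    field_simp; ring

end Params

/-! ### EReal gymnastics for the selected cutoff -/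

section Sel
variable {xbarU : EReal}

lemma toReal_min_nonneg {xh : ℝ} (hxbarU : 0 ≤ xbarU) (hxh : 0 ≤ xh) :
    0 ≤ (min xbarU (xh : EReal)).toReal := by
  have h0 : (0 : EReal) ≤ min xbarU (xh : EReal) :=
    le_min hxbarU (by exact_mod_cast hxh)
  have htop : min xbarU (xh : EReal) ≠ ⊤ := by
    have : min xbarU (xh : EReal) ≤ (xh : EReal) := min_le_right _ _
    intro h; rw [h] at this; simp at this
  have := EReal.toReal_le_toReal h0 (by simp) htop
  simpa using this

lemma toReal_min_le {xh : ℝ} (hxbarU : 0 ≤ xbarU) :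
    (min xbarU (xh : EReal)).toReal ≤ xh := by
  rcases le_total xbarU (xh : EReal) with hc | hc
  · rw [min_eq_left hc]
    have hne : xbarU ≠ ⊥ := by
      intro h; rw [h] at hxbarU; exact absurd hxbarU (by simp)
    have := EReal.toReal_le_toReal hc hne (by simp)
    simpa using this
  · rw [min_eq_right hc, EReal.toReal_coe]

lemma toReal_min_eq {xh : ℝ} (h : (xh : EReal) ≤ xbarU) :
    (min xbarU (xh : EReal)).toReal = xh := by
  rw [min_eq_right h, EReal.toReal_coe]

lemma toReal_min_le' {xh : ℝ} (h : xbarU ≠ ⊤) :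
    (min xbarU (xh : EReal)).toReal ≤ xbarU.toReal := by
  rcases le_total xbarU (xh : EReal) with hc | hc
  · rw [min_eq_left hc]
  · rw [min_eq_right hc, EReal.toReal_coe]
    have := EReal.toReal_le_toReal hc (by simp) h
    simpa using this

lemma toReal_min_eq' {xh : ℝ} (h : xbarU < (xh : EReal)) :
    (min xbarU (xh : EReal)).toReal = xbarU.toReal := by
  rw [min_eq_left h.le]

end Sel

/-! ### The integral of the price curve -/

lemma priceCurve_eq_clamp {α xU xL : ℝ} (h : xU ≤ xL) :
    priceCurve α xU xL = fun t => 1 - α * (min (max t xU) xL - xU) := by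
  funext t
  unfold priceCurve
  rcases le_or_gt t xU with h1 | h1
  · rw [if_pos h1, max_eq_right h1, min_eq_left h]; ring
  · rw [if_neg (not_le.2 h1), max_eq_left h1.le]
    rcases le_or_gt t xL with h2 | h2
    · rw [if_pos h2, min_eq_left h2]
    · rw [if_neg (not_le.2 h2), min_eq_right h2.le]

lemma integral_priceCurve {α xU xL x : ℝ} (hxU0 : 0 ≤ xU) (hUL : xU ≤ xL) (hx : 0 ≤ x) :
    ∫ t in (0:ℝ)..x, priceCurve α xU xL t =
      if x ≤ xU then x
      else if x ≤ xL then x - α * (x - xU)^2/2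
      else xL - α*(xL - xU)^2/2 + (1 - α*(xL - xU))*(x - xL) := by
  rw [priceCurve_eq_clamp hUL]
  set f : ℝ → ℝ := fun t => 1 - α * (min (max t xU) xL - xU) with hf
  have hcont : Continuous f := by
    apply Continuous.sub continuous_const
    apply Continuous.mul continuous_const
    exact (((continuous_id.max continuous_const).min continuous_const).sub continuous_const)
  have hint : ∀ a b : ℝ, IntervalIntegrable f MeasureTheory.volume a b :=
    fun a b => hcont.intervalIntegrable a b
  have h1 : ∀ a b : ℝ, a ≤ xU → b ≤ xU → ∫ t in a..b, f t = b - a := by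
    intro a b ha hb
    rw [intervalIntegral.integral_congr (g := fun _ => (1:ℝ))]
    · simp
    · intro t ht
      have htU : t ≤ xU := le_trans ht.2 (sup_le ha hb)
      simp only [hf]
      rw [max_eq_right htU, min_eq_left hUL]
      ring
  have h2 : ∀ b : ℝ, xU ≤ b → b ≤ xL → ∫ t in xU..b, f t = (b - xU) - α*(b - xU)^2/2 := by
    intro b hb hbL
    rw [intervalIntegral.integral_congr (g := fun t => 1 - α * (t - xU))]
    · rw [intervalIntegral.integral_sub intervalIntegrable_const
        (Continuous.intervalIntegrable (by continuity) _ _)]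
      rw [intervalIntegral.integral_const_mul]
      rw [intervalIntegral.integral_sub (Continuous.intervalIntegrable (by continuity) _ _)
        intervalIntegrable_const]
      simp [integral_id, intervalIntegral.integral_const]
      ring
    · intro t ht
      rw [Set.uIcc_of_le hb] at ht
      simp only [hf]
      rw [max_eq_left ht.1, min_eq_left (le_trans ht.2 hbL)]
  have h3 : ∀ b : ℝ, xL ≤ b → ∫ t in xL..b, f t = (1 - α*(xL - xU))*(b - xL) := by
    intro b hb
    rw [intervalIntegral.integral_congr (g := fun _ => 1 - α*(xL - xU))]
    · simp [intervalIntegral.integral_const]; ring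
    · intro t ht
      rw [Set.uIcc_of_le hb] at ht
      simp only [hf]
      rw [max_eq_left (le_trans hUL ht.1), min_eq_right ht.1]
  split_ifs with hx1 hx2
  · simpa using h1 0 x hxU0 hx1
  · push_neg at hx1
    rw [← intervalIntegral.integral_add_adjacent_intervals (b := xU) (hint 0 xU) (hint xU x)]
    rw [h1 0 xU hxU0 le_rfl, h2 x hx1.le hx2]
    ring
  · push_neg at hx1 hx2
    rw [← intervalIntegral.integral_add_adjacent_intervals (b := xU) (hint 0 xU) (hint xU x)]
    rw [← intervalIntegral.integral_add_adjacent_intervals (b := xL) (hint xU xL) (hint xL x)]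
    rw [h1 0 xU hxU0 le_rfl, h2 xL hUL le_rfl, h3 x hx2.le]
    ring

/-! ### The grand dual-intercept inequality -/

section Grand
variable {θ a a' D D' w : ℝ}

/-- `a * √(2D/a) = √(2aD)`. -/
lemma mul_sqrt_eq (ha : 0 < a) (hD : 0 ≤ D) : a * Real.sqrt (2*D/a) = Real.sqrt (2*a*D) := by
  rw [show 2*a*D = a^2 * (2*D/a) by field_simp, Real.sqrt_mul (by positivity),
    Real.sqrt_sq ha.le]

lemma sqrt_two_mul_le (ha' : 0 < a') (haa : a' ≤ a) (hD : 0 ≤ D) :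
    Real.sqrt (2*a'*D) ≤ Real.sqrt (2*a*D) :=
  Real.sqrt_le_sqrt (by nlinarith)

/-- G-form is monotone in `a`. -/
lemma G_mono_a (hD' : 0 < D') (ha' : 0 < a') (haa : a' ≤ a)
    (hw0 : 0 ≤ w) (hwt : w ≤ Real.sqrt (2*a'*D')) :
    D' - w*Real.sqrt (2*D'/a') + w^2/(2*a') ≤ D' - w*Real.sqrt (2*D'/a) + w^2/(2*a) := by
  have ha : 0 < a := lt_of_lt_of_le ha' haa
  set t' := Real.sqrt (2*D'/a') with ht'
  set t := Real.sqrt (2*D'/a) with ht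
  have htt : t ≤ t' := Real.sqrt_le_sqrt (by rw [div_le_div_iff₀ ha ha']; nlinarith)
  have ht'sq : t'^2 = 2*D'/a' := Real.sq_sqrt (by positivity)
  have htsq : t^2 = 2*D'/a := Real.sq_sqrt (by positivity)
  have ht0 : 0 ≤ t := Real.sqrt_nonneg _
  have hwt' : w * t' ≤ 2*D' := by
    have := mul_le_mul_of_nonneg_right hwt (Real.sqrt_nonneg (2*D'/a'))
    rwa [← Real.sqrt_mul (by positivity), show 2*a'*D' * (2*D'/a') = (2*D')^2 by
      field_simp, Real.sqrt_sq (by positivity)] at this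
  have e1 : w^2/(2*a') = w^2*t'^2/(4*D') := by rw [ht'sq]; field_simp; ring
  have e2 : w^2/(2*a) = w^2*t^2/(4*D') := by rw [htsq]; field_simp; ring
  rw [e1, e2]
  have key : w^2*t'^2 - w^2*t^2 ≤ w*(t'-t)*(4*D') := by
    nlinarith [mul_nonneg (mul_nonneg hw0 (sub_nonneg.2 htt))
      (by nlinarith : (0:ℝ) ≤ 4*D' - w*(t'+t))]
  have final : w^2*t'^2/(4*D') - w^2*t^2/(4*D') ≤ w*(t'-t) := by
    rw [← sub_div, div_le_iff₀ (by linarith : (0:ℝ) < 4*D')]; exact key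
  linarith

/-- F-form is monotone in `a`. -/
lemma F_mono_a (hth : 0 < θ) (ha' : 0 < a') (haa : a' ≤ a) (hw0 : 0 ≤ w) (hwθ : w ≤ θ) :
    D' - w*(D'/θ + θ/(2*a')) + w^2/(2*a') ≤ D' - w*(D'/θ + θ/(2*a)) + w^2/(2*a) := by
  have ha : 0 < a := lt_of_lt_of_le ha' haa
  have key : w*(w - θ) ≤ 0 := mul_nonpos_of_nonneg_of_nonpos hw0 (by linarith)
  have h1 : w*(w-θ)/(2*a') ≤ w*(w-θ)/(2*a) := by
    rw [div_le_div_iff₀ (by positivity) (by positivity)]; nlinarith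
  have e1 : D' - w*(D'/θ + θ/(2*a')) + w^2/(2*a') = D' - w*(D'/θ) + w*(w-θ)/(2*a') := by ring
  have e2 : D' - w*(D'/θ + θ/(2*a)) + w^2/(2*a) = D' - w*(D'/θ) + w*(w-θ)/(2*a) := by ring
  rw [e1, e2]; linarith

/-- At the branch boundary the two cutoff formulas agree. -/
lemma GF_eq (hth : 0 < θ) (ha : 0 < a) (hD : 0 < D) (hc : a*D = θ^2/2) :
    Real.sqrt (2*D/a) = D/θ + θ/(2*a) := by
  have ha' : a ≠ 0 := ne_of_gt ha
  have e : 2*D/a = (2*D/θ)^2 := by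
    field_simp
    nlinarith [hc]
  rw [e, Real.sqrt_sq (by positivity)]
  field_simp
  nlinarith [hc]

/-- G-form is monotone in `D` (nonstrict). -/
lemma G_mono_D (ha : 0 < a) (hD' : 0 < D') (hDD : D' ≤ D)
    (hw0 : 0 ≤ w) (hwt : w ≤ Real.sqrt (2*a*D')) :
    D' - w*Real.sqrt (2*D'/a) + w^2/(2*a) ≤ D - w*Real.sqrt (2*D/a) + w^2/(2*a) := by
  have hD : 0 < D := lt_of_lt_of_le hD' hDD
  set t' := Real.sqrt (2*D'/a) with ht'
  set t := Real.sqrt (2*D/a) with ht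
  have htt : t' ≤ t := Real.sqrt_le_sqrt (by rw [div_le_div_iff₀ ha ha]; nlinarith)
  have ht'sq : t'^2 = 2*D'/a := Real.sq_sqrt (by positivity)
  have htsq : t^2 = 2*D/a := Real.sq_sqrt (by positivity)
  have ht0 : 0 ≤ t' := Real.sqrt_nonneg _
  have hwt' : w ≤ a * t' := by rw [mul_sqrt_eq ha hD'.le]; exact hwt
  have hDt : D - D' = a*(t^2 - t'^2)/2 := by rw [ht'sq, htsq]; field_simp
  have key : w*(t - t') ≤ a*(t^2-t'^2)/2 := by
    nlinarith [mul_nonneg (sub_nonneg.2 htt) (by nlinarith : (0:ℝ) ≤ a*(t+t')/2 - w)]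
  linarith

/-- G-form is strictly monotone in `D`. -/
lemma G_smono_D (ha : 0 < a) (hD' : 0 < D') (hDD : D' < D)
    (hw0 : 0 ≤ w) (hwt : w ≤ Real.sqrt (2*a*D')) :
    D' - w*Real.sqrt (2*D'/a) + w^2/(2*a) < D - w*Real.sqrt (2*D/a) + w^2/(2*a) := by
  have hD : 0 < D := lt_trans hD' hDD
  set t' := Real.sqrt (2*D'/a) with ht'
  set t := Real.sqrt (2*D/a) with ht
  have htt : t' < t := by
    apply Real.sqrt_lt_sqrt (by positivity)
    rw [div_lt_div_iff₀ ha ha]; nlinarith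
  have ht'sq : t'^2 = 2*D'/a := Real.sq_sqrt (by positivity)
  have htsq : t^2 = 2*D/a := Real.sq_sqrt (by positivity)
  have ht0 : 0 < t' := Real.sqrt_pos.2 (by positivity)
  have hwt' : w ≤ a * t' := by rw [mul_sqrt_eq ha hD'.le]; exact hwt
  have hDt : D - D' = a*(t^2 - t'^2)/2 := by rw [ht'sq, htsq]; field_simp
  have key : w*(t - t') < a*(t^2-t'^2)/2 := by
    nlinarith [mul_pos (sub_pos.2 htt) (by nlinarith : (0:ℝ) < a*(t+t')/2 - w)]
  linarith

/-- F-form is strictly monotone in `D`. -/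
lemma F_smono_D (hth : 0 < θ) (ha : 0 < a) (hDD : D' < D) (hwθ : w < θ) :
    D' - w*(D'/θ + θ/(2*a)) + w^2/(2*a) < D - w*(D/θ + θ/(2*a)) + w^2/(2*a) := by
  have h1 : w/θ < 1 := (div_lt_one hth).2 hwθ
  have h2 : (w/θ)*(D - D') < 1*(D - D') := by
    apply mul_lt_mul_of_pos_right h1 (by linarith)
  have e : w*(D/θ) - w*(D'/θ) = (w/θ)*(D - D') := by field_simp
  nlinarith [h2]

/-- Grand inequality: the dual intercept `φ̂(w) = Δ − w·û + w²/(2α)` is strictly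
    increasing along the selection rule. -/
lemma grand (hth : 0 < θ) (hD' : 0 < D') (hDD : D' < D) (ha' : 0 < a') (haa : a' ≤ a)
    (hw0 : 0 ≤ w) (hwθ : w < θ)
    (hwG : a'*D' ≤ θ^2/2 → w ≤ Real.sqrt (2*a'*D')) :
    D' - w*(if a'*D' ≤ θ^2/2 then Real.sqrt (2*D'/a') else D'/θ + θ/(2*a')) + w^2/(2*a')
    < D - w*(if a*D ≤ θ^2/2 then Real.sqrt (2*D/a) else D/θ + θ/(2*a)) + w^2/(2*a) := by
  have ha : 0 < a := lt_of_lt_of_le ha' haa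
  have hD : 0 < D := lt_trans hD' hDD
  -- step 1 : a-monotonicity at D'
  have step1 : D' - w*(if a'*D' ≤ θ^2/2 then Real.sqrt (2*D'/a') else D'/θ + θ/(2*a')) + w^2/(2*a')
      ≤ D' - w*(if a*D' ≤ θ^2/2 then Real.sqrt (2*D'/a) else D'/θ + θ/(2*a)) + w^2/(2*a) := by
    split_ifs with hc' hc hc
    · exact G_mono_a hD' ha' haa hw0 (hwG hc')
    · -- via midpoint a₀ = θ^2/(2D')
      set a₀ := θ^2/(2*D') with ha₀
      have ha₀pos : 0 < a₀ := by positivity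
      have h1 : a' ≤ a₀ := by rw [ha₀, le_div_iff₀ (by positivity)]; nlinarith
      have h2 : a₀ ≤ a := by rw [ha₀, div_le_iff₀ (by positivity)]; nlinarith [not_le.1 hc]
      have hbd : a₀ * D' = θ^2/2 := by rw [ha₀]; field_simp
      calc D' - w*Real.sqrt (2*D'/a') + w^2/(2*a')
          ≤ D' - w*Real.sqrt (2*D'/a₀) + w^2/(2*a₀) := G_mono_a hD' ha' h1 hw0 (hwG hc')
        _ = D' - w*(D'/θ + θ/(2*a₀)) + w^2/(2*a₀) := by rw [GF_eq hth ha₀pos hD' hbd]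
        _ ≤ D' - w*(D'/θ + θ/(2*a)) + w^2/(2*a) := F_mono_a hth ha₀pos h2 hw0 hwθ.le
    · exact absurd (le_trans (mul_le_mul_of_nonneg_right haa hD'.le) hc) hc'
    · exact F_mono_a hth ha' haa hw0 hwθ.le
  -- step 2 : strict D-monotonicity at a
  have hwG2 : a*D' ≤ θ^2/2 → w ≤ Real.sqrt (2*a*D') := by
    intro h
    have h' : a'*D' ≤ θ^2/2 := le_trans (mul_le_mul_of_nonneg_right haa hD'.le) h
    exact le_trans (hwG h') (sqrt_two_mul_le ha' haa hD'.le)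
  have step2 : D' - w*(if a*D' ≤ θ^2/2 then Real.sqrt (2*D'/a) else D'/θ + θ/(2*a)) + w^2/(2*a)
      < D - w*(if a*D ≤ θ^2/2 then Real.sqrt (2*D/a) else D/θ + θ/(2*a)) + w^2/(2*a) := by
    split_ifs with hd' hd hd
    · exact G_smono_D ha hD' hDD hw0 (hwG2 hd')
    · -- via midpoint D₀ = θ^2/(2a)
      set D₀ := θ^2/(2*a) with hD₀
      have hD₀pos : 0 < D₀ := by positivity
      have h1 : D' ≤ D₀ := by rw [hD₀, le_div_iff₀ (by positivity)]; nlinarith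
      have h2 : D₀ < D := by rw [hD₀, div_lt_iff₀ (by positivity)]; nlinarith [not_le.1 hd]
      have hbd : a * D₀ = θ^2/2 := by rw [hD₀]; field_simp
      calc D' - w*Real.sqrt (2*D'/a) + w^2/(2*a)
          ≤ D₀ - w*Real.sqrt (2*D₀/a) + w^2/(2*a) := G_mono_D ha hD' h1 hw0 (hwG2 hd')
        _ = D₀ - w*(D₀/θ + θ/(2*a)) + w^2/(2*a) := by rw [GF_eq hth ha hD₀pos hbd]
        _ < D - w*(D/θ + θ/(2*a)) + w^2/(2*a) := F_smono_D hth ha h2 hwθ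
    · exact absurd (by nlinarith [not_le.1 hd'] : ¬ a*D ≤ θ^2/2) (not_not.2 hd)
    · exact F_smono_D hth ha hDD hwθ
  exact lt_of_le_of_lt step1 step2

end Grand

/-! ### Per-anchor ("side") lemmas -/

/-- `w₁ = 1 - r_L`, the total slope drop. -/
def w1Sel (θbar αbar : ℝ) (xbarU : EReal) (ba ya : ℝ) : ℝ :=
  alphaSel θbar αbar ba ya * (xLSel θbar αbar xbarU ba ya - xUSel θbar αbar xbarU ba ya)

/-- The dual intercept (Legendre transform) of the reserve-value curve at slope `1 - w`. -/
def phiSel (θbar αbar : ℝ) (xbarU : EReal) (ba ya w : ℝ) : ℝ :=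
  (ya - ba) - w * (ya - xUSel θbar αbar xbarU ba ya)
    + w^2/(2*alphaSel θbar αbar ba ya)

section Side
variable {θbar αbar ba ya x w : ℝ} {xbarU : EReal}

lemma alphaSel_pos (hαbar : 0 < αbar) : 0 < alphaSel θbar αbar ba ya :=
  lt_of_lt_of_le hαbar (le_max_left _ _)

lemma xUSel_nonneg (hθ1 : θbar < 1) (hαbar : 0 < αbar) (hxbarU : 0 ≤ xbarU)
    (hya : 0 < ya) (hba0 : θbar * ya < ba) (hbaya : ba < ya) :
    0 ≤ xUSel θbar αbar xbarU ba ya :=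
  toReal_min_nonneg hxbarU (xUHat_nonneg hθ1 hya hba0 hbaya (alphaSel_pos hαbar)
    (le_max_right _ _))

lemma xUSel_le_xUHat (hxbarU : 0 ≤ xbarU) :
    xUSel θbar αbar xbarU ba ya ≤ xUHat θbar (alphaSel θbar αbar ba ya) ba ya :=
  toReal_min_le hxbarU

lemma u_pos (hθ1 : θbar < 1) (hαbar : 0 < αbar) (hxbarU : 0 ≤ xbarU)
    (hya : 0 < ya) (hbaya : ba < ya) :
    0 < ya - xUSel θbar αbar xbarU ba ya := by
  have h1 := xUSel_le_xUHat (ba := ba) (ya := ya) (θbar := θbar) (αbar := αbar) hxbarU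
  have h2 := xUHat_lt_ya hθ1 hya hbaya (alphaSel_pos (ba := ba) (ya := ya) (θbar := θbar) hαbar)
  linarith

lemma sq_le_u (hθ1 : θbar < 1) (hαbar : 0 < αbar) (hxbarU : 0 ≤ xbarU)
    (hya : 0 < ya) (hba0 : θbar * ya < ba) (hbaya : ba < ya) :
    2*(ya - ba)/alphaSel θbar αbar ba ya ≤ (ya - xUSel θbar αbar xbarU ba ya)^2 := by
  set A := alphaSel θbar αbar ba ya
  have hA : 0 < A := alphaSel_pos hαbar
  have h1 := sq_xUHat (a := A) hθ1 hya hbaya hA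
  have h2 : ya - xUHat θbar A ba ya ≤ ya - xUSel θbar αbar xbarU ba ya := by
    have := xUSel_le_xUHat (ba := ba) (ya := ya) (θbar := θbar) (αbar := αbar) hxbarU
    linarith
  have h3 : 0 ≤ ya - xUHat θbar A ba ya := by
    have := xUHat_nonneg hθ1 hya hba0 hbaya hA (le_max_right _ _)
    have := xUHat_lt_ya (a := A) hθ1 hya hbaya hA
    linarith
  nlinarith

lemma sL_facts (hθ1 : θbar < 1) (hαbar : 0 < αbar) (hxbarU : 0 ≤ xbarU)
    (hya : 0 < ya) (hba0 : θbar * ya < ba) (hbaya : ba < ya) :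
    0 ≤ ya - xLSel θbar αbar xbarU ba ya ∧
    ya - xLSel θbar αbar xbarU ba ya < ya - xUSel θbar αbar xbarU ba ya ∧
    alphaSel θbar αbar ba ya * ((ya - xUSel θbar αbar xbarU ba ya)^2
      - (ya - xLSel θbar αbar xbarU ba ya)^2) = 2*(ya - ba) := by
  set A := alphaSel θbar αbar ba ya
  set XU := xUSel θbar αbar xbarU ba ya
  have hA : 0 < A := alphaSel_pos hαbar
  have hsq := sq_le_u hθ1 hαbar hxbarU hya hba0 hbaya
  have hu : 0 < ya - XU := u_pos hθ1 hαbar hxbarU hya hbaya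
  have hsL : ya - xLSel θbar αbar xbarU ba ya = Real.sqrt ((ya - XU)^2 - 2*(ya-ba)/A) := by
    unfold xLSel; ring
  have hΔA : 0 < 2*(ya - ba)/A := by
    have : 0 < ya - ba := by linarith
    positivity
  refine ⟨by rw [hsL]; exact Real.sqrt_nonneg _, ?_, ?_⟩
  · rw [hsL]
    have := Real.sqrt_lt_sqrt (by linarith : (0:ℝ) ≤ (ya - XU)^2 - 2*(ya-ba)/A)
      (by linarith : (ya - XU)^2 - 2*(ya-ba)/A < (ya - XU)^2)
    rwa [Real.sqrt_sq hu.le] at this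
  · rw [hsL, Real.sq_sqrt (by linarith)]
    field_simp; ring
lemma w1_pos (hθ1 : θbar < 1) (hαbar : 0 < αbar) (hxbarU : 0 ≤ xbarU)
    (hya : 0 < ya) (hba0 : θbar * ya < ba) (hbaya : ba < ya) :
    0 < w1Sel θbar αbar xbarU ba ya := by
  obtain ⟨h1, h2, h3⟩ := sL_facts hθ1 hαbar hxbarU hya hba0 hbaya
  have hA : 0 < alphaSel θbar αbar ba ya := alphaSel_pos hαbar
  unfold w1Sel
  nlinarith

lemma w1_le_theta (hθ1 : θbar < 1) (hαbar : 0 < αbar) (hxbarU : 0 ≤ xbarU)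
    (hya : 0 < ya) (hba0 : θbar * ya < ba) (hbaya : ba < ya) :
    w1Sel θbar αbar xbarU ba ya ≤ 1 - θbar := by
  set A := alphaSel θbar αbar ba ya with hAdef
  set XU := xUSel θbar αbar xbarU ba ya with hXUdef
  set XL := xLSel θbar αbar xbarU ba ya with hXLdef
  obtain ⟨h1, h2, h3⟩ := sL_facts hθ1 hαbar hxbarU hya hba0 hbaya
  have hA : 0 < A := alphaSel_pos hαbar
  have hth : 0 < 1 - θbar := by linarith
  have hΔ : 0 < ya - ba := by linarith
  have hu : 0 < ya - XU := u_pos hθ1 hαbar hxbarU hya hbaya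
  have huh : ya - xUHat θbar A ba ya ≤ ya - XU := by
    have := xUSel_le_xUHat (ba := ba) (ya := ya) (θbar := θbar) (αbar := αbar) hxbarU
    rw [← hXUdef] at this
    linarith
  -- key : (1-θbar) * ((ya - XU) + (ya - XL)) ≥ 2*(ya - ba)
  have key : 2*(ya - ba) ≤ (1 - θbar) * ((ya - XU) + (ya - XL)) := by
    rcases le_or_gt (A * (ya - ba)) ((1-θbar)^2/2) with hbr | hbr
    · -- G-branch : (1-θbar)(ya - XU) ≥ (1-θbar)√(2Δ/A) ≥ 2Δ · (θ/√(2AΔ)) ≥ 2Δ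
      have huG : Real.sqrt (2*(ya-ba)/A) ≤ ya - XU := by
        have := ya_sub_xUHat (a := A) (ba := ba) (ya := ya) hθ1
        rw [if_pos hbr] at this
        linarith
      have hsq : Real.sqrt (2*(ya-ba)/A) * Real.sqrt (2*A*(ya-ba)) = 2*(ya-ba) := by
        rw [← Real.sqrt_mul (by positivity)]
        rw [show 2*(ya-ba)/A * (2*A*(ya-ba)) = (2*(ya-ba))^2 by field_simp]
        exact Real.sqrt_sq (by positivity)
      have hle : Real.sqrt (2*A*(ya-ba)) ≤ 1 - θbar := by
        have := Real.sqrt_le_sqrt (by linarith : 2*A*(ya-ba) ≤ (1-θbar)^2)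
        rwa [Real.sqrt_sq hth.le] at this
      have hs0 : 0 ≤ Real.sqrt (2*(ya-ba)/A) := Real.sqrt_nonneg _
      nlinarith [Real.sqrt_nonneg (2*A*(ya-ba))]
    · -- F-branch : u ≥ Δ/θ + θ/(2A), sL ≥ Δ/θ - θ/(2A)
      have huF : (ya-ba)/(1-θbar) + (1-θbar)/(2*A) ≤ ya - XU := by
        have := ya_sub_xUHat (a := A) (ba := ba) (ya := ya) hθ1
        rw [if_neg (not_le.2 hbr)] at this
        linarith
      have hq0 : 0 ≤ (ya-ba)/(1-θbar) - (1-θbar)/(2*A) := by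
        rw [sub_nonneg, div_le_div_iff₀ (by positivity) hth]
        nlinarith
      have hsLF : (ya-ba)/(1-θbar) - (1-θbar)/(2*A) ≤ ya - XL := by
        have hsL : ya - XL = Real.sqrt ((ya - XU)^2 - 2*(ya-ba)/A) := by
          rw [hXLdef]; unfold xLSel; rw [← hXUdef, ← hAdef]; ring
        rw [hsL]
        apply Real.le_sqrt_of_sq_le
        have hpq : ((ya-ba)/(1-θbar))*((1-θbar)/(2*A)) = (ya-ba)/(2*A) := by field_simp
        have h2d : 2*(ya-ba)/A = 4*((ya-ba)/(2*A)) := by ring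
        nlinarith [pow_le_pow_left₀ (by positivity : (0:ℝ) ≤ (ya-ba)/(1-θbar) + (1-θbar)/(2*A)) huF 2]
      have hcan : (1-θbar)*((ya-ba)/(1-θbar)) = ya-ba := by field_simp
      nlinarith [mul_le_mul_of_nonneg_left (add_le_add huF hsLF) hth.le]
  have hsum : 0 < (ya - XU) + (ya - XL) := by linarith
  -- w1 * ((ya-XU)+(ya-XL)) = 2Δ ≤ θ * sum
  have hw1 : w1Sel θbar αbar xbarU ba ya * ((ya - XU) + (ya - XL)) = 2*(ya-ba) := by
    unfold w1Sel
    rw [← hAdef, ← hXUdef, ← hXLdef]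
    linear_combination h3
  nlinarith [hw1]

lemma w1_le_sqrt (hθ1 : θbar < 1) (hαbar : 0 < αbar) (hxbarU : 0 ≤ xbarU)
    (hya : 0 < ya) (hba0 : θbar * ya < ba) (hbaya : ba < ya)
    (hbr : alphaSel θbar αbar ba ya * (ya - ba) ≤ (1-θbar)^2/2) :
    w1Sel θbar αbar xbarU ba ya ≤ Real.sqrt (2*alphaSel θbar αbar ba ya*(ya - ba)) := by
  set A := alphaSel θbar αbar ba ya with hAdef
  set XU := xUSel θbar αbar xbarU ba ya with hXUdef
  set XL := xLSel θbar αbar xbarU ba ya with hXLdef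
  obtain ⟨h1, h2, h3⟩ := sL_facts hθ1 hαbar hxbarU hya hba0 hbaya
  have hA : 0 < A := alphaSel_pos hαbar
  have hΔ : 0 < ya - ba := by linarith
  have hw1 : w1Sel θbar αbar xbarU ba ya * ((ya - XU) + (ya - XL)) = 2*(ya-ba) := by
    unfold w1Sel
    rw [← hAdef, ← hXUdef, ← hXLdef]
    linear_combination h3
  have huG : Real.sqrt (2*(ya-ba)/A) ≤ ya - XU := by
    have hh := ya_sub_xUHat (a := A) (ba := ba) (ya := ya) hθ1
    rw [if_pos hbr] at hh
    have := xUSel_le_xUHat (ba := ba) (ya := ya) (θbar := θbar) (αbar := αbar) hxbarU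
    rw [← hXUdef, ← hAdef] at this
    linarith
  have hsq : Real.sqrt (2*A*(ya-ba)) * Real.sqrt (2*(ya-ba)/A) = 2*(ya-ba) := by
    rw [← Real.sqrt_mul (by positivity)]
    rw [show 2*A*(ya-ba) * (2*(ya-ba)/A) = (2*(ya-ba))^2 by field_simp]
    exact Real.sqrt_sq (by positivity)
  have hq0 : 0 ≤ Real.sqrt (2*A*(ya-ba)) := Real.sqrt_nonneg _
  have hsum : 0 < (ya - XU) + (ya - XL) := by
    have := u_pos hθ1 hαbar hxbarU hya hbaya
    rw [← hXUdef] at this; linarith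
  nlinarith [mul_le_mul_of_nonneg_left huG hq0]

lemma phi_w1 (hθ1 : θbar < 1) (hαbar : 0 < αbar) (hxbarU : 0 ≤ xbarU)
    (hya : 0 < ya) (hba0 : θbar * ya < ba) (hbaya : ba < ya) :
    phiSel θbar αbar xbarU ba ya (w1Sel θbar αbar xbarU ba ya) = 0 := by
  set A := alphaSel θbar αbar ba ya with hAdef
  set XU := xUSel θbar αbar xbarU ba ya with hXUdef
  set XL := xLSel θbar αbar xbarU ba ya with hXLdef
  obtain ⟨h1, h2, h3⟩ := sL_facts hθ1 hαbar hxbarU hya hba0 hbaya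
  have hA : 0 < A := alphaSel_pos hαbar
  unfold phiSel w1Sel
  rw [← hAdef, ← hXUdef, ← hXLdef]
  have e : (A*(XL-XU))^2/(2*A) = A*(XL-XU)^2/2 := by
    field_simp
  rw [e]
  linear_combination (-(1:ℝ)/2) * h3

lemma phi_nonneg (hθ1 : θbar < 1) (hαbar : 0 < αbar) (hxbarU : 0 ≤ xbarU)
    (hya : 0 < ya) (hba0 : θbar * ya < ba) (hbaya : ba < ya)
    (hw0 : 0 ≤ w) (hww1 : w ≤ w1Sel θbar αbar xbarU ba ya) :
    0 ≤ phiSel θbar αbar xbarU ba ya w := by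
  set A := alphaSel θbar αbar ba ya with hAdef
  set XU := xUSel θbar αbar xbarU ba ya with hXUdef
  set XL := xLSel θbar αbar xbarU ba ya with hXLdef
  set W := w1Sel θbar αbar xbarU ba ya with hWdef
  obtain ⟨h1, h2, h3⟩ := sL_facts hθ1 hαbar hxbarU hya hba0 hbaya
  have hA : 0 < A := alphaSel_pos hαbar
  have e : phiSel θbar αbar xbarU ba ya w
      = (W - w)*((ya - XU) - (w + W)/(2*A)) + phiSel θbar αbar xbarU ba ya W := by
    unfold phiSel
    rw [← hAdef, ← hXUdef]
    ring
  have hzero : phiSel θbar αbar xbarU ba ya W = 0 := by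
    rw [hWdef]; exact phi_w1 hθ1 hαbar hxbarU hya hba0 hbaya
  rw [e, hzero, add_zero]
  apply mul_nonneg (by linarith)
  have hWA : W/A = XL - XU := by
    rw [hWdef]; unfold w1Sel; rw [← hAdef, ← hXUdef, ← hXLdef]; field_simp
  have hle : (w + W)/(2*A) ≤ XL - XU := by
    rw [← hWA, div_le_div_iff₀ (by positivity) hA]
    nlinarith
  rw [← hXUdef, ← hXLdef] at *
  linarith

lemma reserveB_cases (hθ1 : θbar < 1) (hαbar : 0 < αbar) (hxbarU : 0 ≤ xbarU)
    (hya : 0 < ya) (hba0 : θbar * ya < ba) (hbaya : ba < ya) (hx0 : 0 ≤ x) :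
    reserveB θbar αbar xbarU ba ya x =
      if x ≤ xUSel θbar αbar xbarU ba ya then ba - x
      else if x ≤ xLSel θbar αbar xbarU ba ya then
        ba - x + alphaSel θbar αbar ba ya * (x - xUSel θbar αbar xbarU ba ya)^2/2
      else (1 - w1Sel θbar αbar xbarU ba ya)*(ya - x)
        - phiSel θbar αbar xbarU ba ya (w1Sel θbar αbar xbarU ba ya) := by
  set A := alphaSel θbar αbar ba ya with hAdef
  set XU := xUSel θbar αbar xbarU ba ya with hXUdef
  set XL := xLSel θbar αbar xbarU ba ya with hXLdef
  obtain ⟨h1, h2, h3⟩ := sL_facts hθ1 hαbar hxbarU hya hba0 hbaya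
  have hA : 0 < A := alphaSel_pos hαbar
  have hXU0 : 0 ≤ XU := xUSel_nonneg hθ1 hαbar hxbarU hya hba0 hbaya
  have hUL : XU ≤ XL := by rw [hXUdef, hXLdef]; linarith
  unfold reserveB
  rw [← hAdef, ← hXUdef, ← hXLdef, integral_priceCurve hXU0 hUL hx0]
  rw [phi_w1 hθ1 hαbar hxbarU hya hba0 hbaya]
  split_ifs with hc1 hc2
  · ring
  · ring
  · unfold w1Sel
    rw [← hAdef, ← hXUdef, ← hXLdef, sub_zero]
    linear_combination ((1:ℝ)/2) * h3

lemma reserveB_repr (hθ1 : θbar < 1) (hαbar : 0 < αbar) (hxbarU : 0 ≤ xbarU)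
    (hya : 0 < ya) (hba0 : θbar * ya < ba) (hbaya : ba < ya) (hx0 : 0 ≤ x) :
    ∃ w, 0 ≤ w ∧ w ≤ w1Sel θbar αbar xbarU ba ya ∧
      reserveB θbar αbar xbarU ba ya x = (1 - w)*(ya - x) - phiSel θbar αbar xbarU ba ya w := by
  set A := alphaSel θbar αbar ba ya with hAdef
  set XU := xUSel θbar αbar xbarU ba ya with hXUdef
  set XL := xLSel θbar αbar xbarU ba ya with hXLdef
  set W := w1Sel θbar αbar xbarU ba ya with hWdef
  have hA : 0 < A := alphaSel_pos hαbar
  have hW : W = A*(XL - XU) := by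
    rw [hWdef]; unfold w1Sel; rw [← hAdef, ← hXUdef, ← hXLdef]
  have hWpos : 0 < W := by rw [hWdef]; exact w1_pos hθ1 hαbar hxbarU hya hba0 hbaya
  rw [reserveB_cases hθ1 hαbar hxbarU hya hba0 hbaya hx0, ← hAdef, ← hXUdef, ← hXLdef, ← hWdef]
  split_ifs with hc1 hc2
  · exact ⟨0, le_rfl, hWpos.le, by unfold phiSel; rw [← hAdef, ← hXUdef]; ring⟩
  · push_neg at hc1
    refine ⟨A*(x - XU), by nlinarith, by nlinarith, ?_⟩
    unfold phiSel
    rw [← hAdef, ← hXUdef]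
    field_simp
    ring
  · exact ⟨W, hWpos.le, le_rfl, rfl⟩

lemma reserveB_ge (hθ1 : θbar < 1) (hαbar : 0 < αbar) (hxbarU : 0 ≤ xbarU)
    (hya : 0 < ya) (hba0 : θbar * ya < ba) (hbaya : ba < ya) (hx0 : 0 ≤ x)
    (hw0 : 0 ≤ w) (hww1 : w ≤ w1Sel θbar αbar xbarU ba ya) :
    (1 - w)*(ya - x) - phiSel θbar αbar xbarU ba ya w ≤ reserveB θbar αbar xbarU ba ya x := by
  set A := alphaSel θbar αbar ba ya with hAdef
  set XU := xUSel θbar αbar xbarU ba ya with hXUdef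
  set XL := xLSel θbar αbar xbarU ba ya with hXLdef
  set W := w1Sel θbar αbar xbarU ba ya with hWdef
  obtain ⟨h1, h2, h3⟩ := sL_facts hθ1 hαbar hxbarU hya hba0 hbaya
  rw [← hXLdef] at h1
  rw [← hXUdef, ← hXLdef] at h2
  have hA : 0 < A := alphaSel_pos hαbar
  have hW : W = A*(XL - XU) := by
    rw [hWdef]; unfold w1Sel; rw [← hAdef, ← hXUdef, ← hXLdef]
  rw [reserveB_cases hθ1 hαbar hxbarU hya hba0 hbaya hx0, ← hAdef, ← hXUdef, ← hXLdef, ← hWdef]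
  split_ifs with hc1 hc2
  · have e : ba - x - ((1 - w)*(ya - x) - phiSel θbar αbar xbarU ba ya w)
        = w*(XU - x) + w^2/(2*A) := by
      unfold phiSel; rw [← hAdef, ← hXUdef]; ring
    have hp : 0 ≤ w^2/(2*A) := by positivity
    nlinarith [mul_nonneg hw0 (by linarith : (0:ℝ) ≤ XU - x)]
  · have e : ba - x + A*(x - XU)^2/2 - ((1 - w)*(ya - x) - phiSel θbar αbar xbarU ba ya w)
        = (w - A*(x - XU))^2/(2*A) := by
      unfold phiSel; rw [← hAdef, ← hXUdef]
      field_simp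
      ring
    have hp : 0 ≤ (w - A*(x - XU))^2/(2*A) := by positivity
    linarith
  · push_neg at hc2
    have e : (1 - W)*(ya - x) - phiSel θbar αbar xbarU ba ya W
        - ((1 - w)*(ya - x) - phiSel θbar αbar xbarU ba ya w)
        = (W - w)*((x - XU) - (w + W)/(2*A)) := by
      unfold phiSel; rw [← hAdef, ← hXUdef]; ring
    have hf2 : 0 ≤ (x - XU) - (w + W)/(2*A) := by
      have hle : (w + W)/(2*A) ≤ XL - XU := by
        rw [div_le_iff₀ (by positivity)]
        nlinarith
      linarith
    nlinarith [mul_nonneg (by linarith : (0:ℝ) ≤ W - w) hf2]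

end Side

/-- Theorem `thm:mon-b0`: at any non-trivial point, the reserve value
    `b(x; b_a)` is strictly increasing in the anchor reserve value `b_a`. -/
theorem reserve_strictMono_in_anchor
    (θbar αbar ya x ba ba' : ℝ) (xbarU : EReal)
    (hθ0 : 0 ≤ θbar) (hθ1 : θbar < 1) (hαbar : 0 < αbar) (hxbarU : 0 ≤ xbarU)
    (hya : 0 < ya) (hx0 : 0 ≤ x) (hxya : x < ya)
    (hba0 : θbar * ya < ba) (hbab : ba < ba') (hba'ya : ba' < ya)
    (hr1 : reserveB θbar αbar xbarU ba ya x / (ya - x) < 1)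
    (hr2 : θbar < reserveB θbar αbar xbarU ba ya x / (ya - x))
    (hr1' : reserveB θbar αbar xbarU ba' ya x / (ya - x) < 1)
    (hr2' : θbar < reserveB θbar αbar xbarU ba' ya x / (ya - x)) :
    reserveB θbar αbar xbarU ba ya x < reserveB θbar αbar xbarU ba' ya x := by
  have hbaya : ba < ya := lt_trans hbab hba'ya
  have hba0' : θbar * ya < ba' := lt_trans hba0 hbab
  have hs : 0 < ya - x := by linarith
  have hth : 0 < 1 - θbar := by linarith
  set A := alphaSel θbar αbar ba ya with hAdef
  set A' := alphaSel θbar αbar ba' ya with hA'def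
  have hA : 0 < A := alphaSel_pos hαbar
  have hA' : 0 < A' := alphaSel_pos hαbar
  have hAA : A' ≤ A :=
    max_le_max le_rfl (alphaHat_anti hθ1 hya hba0 hbaya hbab.le hba'ya)
  have hB2 : θbar * (ya - x) < reserveB θbar αbar xbarU ba ya x := (lt_div_iff₀ hs).1 hr2
  obtain ⟨w, hw0, hww1, hEQ⟩ := reserveB_repr hθ1 hαbar hxbarU hya hba0 hbaya hx0
  have hφ : 0 ≤ phiSel θbar αbar xbarU ba ya w :=
    phi_nonneg hθ1 hαbar hxbarU hya hba0 hbaya hw0 hww1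
  have hwθ : w < 1 - θbar := by
    rw [hEQ] at hB2
    nlinarith
  rcases le_or_gt w (w1Sel θbar αbar xbarU ba' ya) with hc | hc
  · have key : phiSel θbar αbar xbarU ba' ya w < phiSel θbar αbar xbarU ba ya w := by
      by_cases hclamp : ((xUHat θbar A ba ya : ℝ) : EReal) ≤ xbarU
      · -- unclamped on the `ba` side
        have hXU : xUSel θbar αbar xbarU ba ya = xUHat θbar A ba ya := by
          unfold xUSel; rw [← hAdef]; exact toReal_min_eq hclamp
        have hphi : phiSel θbar αbar xbarU ba ya w
            = (ya - ba) - w*(if A*(ya-ba) ≤ (1-θbar)^2/2 then Real.sqrt (2*(ya-ba)/A)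
                else (ya-ba)/(1-θbar) + (1-θbar)/(2*A)) + w^2/(2*A) := by
          unfold phiSel; rw [← hAdef, hXU, ya_sub_xUHat hθ1]
        have hphi' : phiSel θbar αbar xbarU ba' ya w
            ≤ (ya - ba') - w*(if A'*(ya-ba') ≤ (1-θbar)^2/2 then Real.sqrt (2*(ya-ba')/A')
                else (ya-ba')/(1-θbar) + (1-θbar)/(2*A')) + w^2/(2*A') := by
          unfold phiSel
          rw [← hA'def, ← ya_sub_xUHat hθ1]
          have h1 : xUSel θbar αbar xbarU ba' ya ≤ xUHat θbar A' ba' ya := by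
            rw [hA'def]; exact xUSel_le_xUHat hxbarU
          nlinarith [mul_le_mul_of_nonneg_left
            (show ya - xUHat θbar A' ba' ya ≤ ya - xUSel θbar αbar xbarU ba' ya by linarith) hw0]
        have hgrand := grand (θ := 1-θbar) (a := A) (a' := A') (D := ya - ba) (D' := ya - ba')
          hth (by linarith) (by linarith) hA' hAA hw0 hwθ
          (fun hbr => le_trans hc (w1_le_sqrt hθ1 hαbar hxbarU hya hba0' hba'ya
            (by rw [← hA'def]; exact hbr)))
        rw [hphi]
        exact lt_of_le_of_lt hphi' hgrand
      · -- clamped on the `ba` side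
        push_neg at hclamp
        have hane : alphaHat θbar ba ya ≤ αbar := by
          by_contra hcon
          push_neg at hcon
          have hAeq : A = alphaHat θbar ba ya := by rw [hAdef]; exact max_eq_right hcon.le
          have hz : xUHat θbar A ba ya = 0 := by
            rw [hAeq]; exact xUHat_hat_eq_zero hθ1 hya hba0 hbaya
          rw [hz] at hclamp
          have : xbarU < 0 := by exact_mod_cast hclamp
          exact absurd hxbarU (not_le.2 this)
        have hane' : alphaHat θbar ba' ya ≤ αbar :=
          le_trans (alphaHat_anti hθ1 hya hba0 hbaya hbab.le hba'ya) hane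
        have hAeq : A = αbar := by rw [hAdef]; exact max_eq_left hane
        have hA'eq : A' = αbar := by rw [hA'def]; exact max_eq_left hane'
        have hXUeq : xUSel θbar αbar xbarU ba ya = xbarU.toReal := by
          unfold xUSel; rw [← hAdef]; exact toReal_min_eq' hclamp
        have hXU'le : xUSel θbar αbar xbarU ba' ya ≤ xbarU.toReal := by
          unfold xUSel
          exact toReal_min_le' (hclamp.trans (EReal.coe_lt_top _)).ne
        unfold phiSel
        rw [← hAdef, ← hA'def, hAeq, hA'eq, hXUeq]
        nlinarith [mul_le_mul_of_nonneg_left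
          (show ya - xbarU.toReal ≤ ya - xUSel θbar αbar xbarU ba' ya by linarith) hw0]
    calc reserveB θbar αbar xbarU ba ya x
        = (1 - w)*(ya - x) - phiSel θbar αbar xbarU ba ya w := hEQ
      _ < (1 - w)*(ya - x) - phiSel θbar αbar xbarU ba' ya w := by linarith
      _ ≤ reserveB θbar αbar xbarU ba' ya x :=
          reserveB_ge hθ1 hαbar hxbarU hya hba0' hba'ya hx0 hw0 hc
  · have hW' := w1_pos (ba := ba') (θbar := θbar) (αbar := αbar) (xbarU := xbarU) (ya := ya)
      hθ1 hαbar hxbarU hya hba0' hba'ya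
    have hB' := reserveB_ge hθ1 hαbar hxbarU hya hba0' hba'ya hx0 hW'.le
      (le_refl (w1Sel θbar αbar xbarU ba' ya))
    rw [phi_w1 hθ1 hαbar hxbarU hya hba0' hba'ya, sub_zero] at hB'
    have hup : reserveB θbar αbar xbarU ba ya x ≤ (1 - w)*(ya - x) := by
      rw [hEQ]; linarith
    have hlt : (1 - w)*(ya - x) < (1 - w1Sel θbar αbar xbarU ba' ya)*(ya - x) :=
      mul_lt_mul_of_pos_right (by linarith) hs
    linarith

end PAMM
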